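/- arXiv:1802.03073 — 2 statements merged into one kernel-verified Lean document; each statement's English description precedes it below -/
import Mathlib

section
/- Let q, b ∈ ℂ with 0 < |q| < 1, b ≠ 0, b² ≠ 1, and suppose b ≠ q^m and b ≠ −q^m for every integer m (so that all denominators below are nonzero). Suppose (α_n)_{n≥0}, (β_n)_{n≥0} form a Bailey pair relative to (1, q), i.e. β_n = Σ_{j=0}^{n} α_j / ((q;q)_{n−j} (q;q)_{n+j}) for all n ≥ 0. For a parameter c define α*_n(c) = [(1 − q^{2n+1})(q/c;q)_n (−c)^n q^{n(n−1)/2} / ((1 − q)(cq;q)_n)] · Σ_{j=0}^{n} [(c;q)_j / (q/c;q)_j] (−c)^{−j} q^{−j(j−1)/2} α_j, and set L1_n = α*_n(b)/(2(1 − b)) + α*_n(−b)/(2(1 + b)) and L2_n = β_n / (1 − b² q^{2n}). Then (L1_n, L2_n) is a Bailey pair relative to (q, q), i.e. L2_n = Σ_{j=0}^{n} L1_j / ((q;q)_{n−j} (q²;q)_{n+j}) for all n ≥ 0. -/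
set_option maxHeartbeats 2000000
set_option linter.unusedSectionVars false


open Finset

/-- The q-Pochhammer symbol `(z;q)_n = ∏_{k=0}^{n-1} (1 - z q^k)`. -/
def qPoch (z q : ℂ) (n : ℕ) : ℂ := ∏ k ∈ Finset.range n, (1 - z * q ^ k)

/-- Lovejoy's transformed sequence `α*_n(c)` at `a = 1`. -/
noncomputable def alphaStar (q c : ℂ) (α : ℕ → ℂ) (n : ℕ) : ℂ :=
  (1 - q ^ (2 * n + 1)) * qPoch (q / c) q n * (-c) ^ n * q ^ (n * (n - 1) / 2) /
      ((1 - q) * qPoch (c * q) q n) *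
    ∑ j ∈ Finset.range (n + 1),
      qPoch c q j / qPoch (q / c) q j * (-c) ^ (-(j : ℤ)) *
        q ^ (-((j * (j - 1) / 2 : ℕ) : ℤ)) * α j

lemma qPoch_zero (z q : ℂ) : qPoch z q 0 = 1 := by simp [qPoch]

lemma qPoch_succ (z q : ℂ) (n : ℕ) : qPoch z q (n+1) = qPoch z q n * (1 - z * q ^ n) := by
  simp [qPoch, Finset.prod_range_succ]

lemma qPoch_shift (z q : ℂ) (n : ℕ) : qPoch z q (n+1) = (1 - z) * qPoch (z*q) q n := by
  rw [qPoch, Finset.prod_range_succ']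
  simp only [pow_zero, mul_one, qPoch]
  rw [mul_comm]
  congr 1
  exact Finset.prod_congr rfl fun k _ => by ring

lemma qPoch_ne_zero {z q : ℂ} (h : ∀ k : ℕ, 1 - z * q ^ k ≠ 0) (n : ℕ) : qPoch z q n ≠ 0 :=
  Finset.prod_ne_zero_iff.mpr fun k _ => h k

lemma tri_succ (j : ℕ) : (j+1) * ((j+1) - 1) / 2 = j * (j-1) / 2 + j := by
  cases j with
  | zero => rfl
  | succ m =>
    simp only [Nat.add_sub_cancel]
    rw [← Nat.add_mul_div_left _ _ (by norm_num : 0 < 2)]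
    congr 1
    ring

noncomputable def Gf (q c : ℂ) (n : ℕ) : ℂ := ∏ k ∈ Finset.range n, (q * q ^ k - c)

lemma Gf_succ (q c : ℂ) (n : ℕ) : Gf q c (n+1) = Gf q c n * (q * q ^ n - c) :=
  Finset.prod_range_succ _ _

lemma Gf_eq {q c : ℂ} (hc : c ≠ 0) (n : ℕ) : qPoch (q/c) q n * (-c) ^ n = Gf q c n := by
  rw [qPoch, Gf, show ((-c)^n : ℂ) = ∏ _k ∈ Finset.range n, -c by simp, ← Finset.prod_mul_distrib]
  refine Finset.prod_congr rfl fun k _ => ?_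
  field_simp
  ring

noncomputable def Af (q c : ℂ) (k : ℕ) : ℂ :=
  (1 - q ^ (2 * k + 1)) * qPoch (q / c) q k * (-c) ^ k * q ^ (k * (k - 1) / 2) /
    ((1 - q) * qPoch (c * q) q k)

noncomputable def Bf (q c : ℂ) (i : ℕ) : ℂ :=
  qPoch c q i / qPoch (q / c) q i * (-c) ^ (-(i : ℤ)) * q ^ (-((i * (i - 1) / 2 : ℕ) : ℤ))

noncomputable def Tf (q c : ℂ) (k m p : ℕ) : ℂ :=
  (1 - q ^ (2*k+1)) * (1 - c) * Gf q c k * q ^ (k * (k-1) / 2) /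
    (qPoch c q (k+1) * qPoch q q m * qPoch q q (p+1))

noncomputable def Hf (q c : ℂ) (j d : ℕ) : ℂ :=
  (1 - c) * Gf q c j * q ^ (j * (j-1) / 2) /
    ((1 - c * q ^ (j + d)) * qPoch q q d * qPoch q q (2*j+d) * qPoch c q j)

section Key
variable {q c : ℂ} (hq : q ≠ 0) (hc : c ≠ 0)
  (hu : ∀ k : ℕ, 1 - q ^ (k+1) ≠ 0)
  (hcq : ∀ k : ℕ, 1 - c * q ^ k ≠ 0)

include hq hc hu hcq

lemma qP_q_ne (n : ℕ) : qPoch q q n ≠ 0 :=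
  qPoch_ne_zero (fun k => by have := hu k; rwa [pow_succ'] at this) n

lemma qP_q2_ne (n : ℕ) : qPoch (q^2) q n ≠ 0 :=
  qPoch_ne_zero (fun k => by have := hu (k+1); rwa [show k+1+1 = 2+k by ring, pow_add] at this) n

lemma qP_c_ne (n : ℕ) : qPoch c q n ≠ 0 := qPoch_ne_zero hcq n

lemma qP_cq_ne (n : ℕ) : qPoch (c*q) q n ≠ 0 :=
  qPoch_ne_zero (fun k => by have := hcq (k+1); rwa [pow_succ', ← mul_assoc] at this) n

lemma key (d : ℕ) : ∀ j : ℕ,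
    ∑ i ∈ Finset.range (d+1), Tf q c (j+i) (d-i) (2*j+d+i)
      = Hf q c j d := by
  induction d with
  | zero =>
    intro j
    rw [Finset.sum_range_one]
    simp only [Nat.add_zero, Nat.sub_zero, Tf, Hf]
    rw [qPoch_zero, qPoch_succ c q j, qPoch_succ q q (2*j)]
    have hE := qP_q_ne hq hc hu hcq (2*j)
    have hMc := qP_c_ne hq hc hu hcq j
    have h2 : (1:ℂ) - q*q^(2*j) ≠ 0 := by rw [← pow_succ']; exact hu (2*j)
    have h3 := hcq j
    rw [div_eq_div_iff (by apply_rules [mul_ne_zero, one_ne_zero])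
      (by apply_rules [mul_ne_zero, one_ne_zero])]
    ring
  | succ d ih =>
    intro j
    rw [Finset.sum_range_succ']
    have hre : ∑ i ∈ Finset.range (d+1), Tf q c (j+(i+1)) (d+1-(i+1)) (2*j+(d+1)+(i+1))
        = Hf q c (j+1) d := by
      rw [← ih (j+1)]
      refine Finset.sum_congr rfl fun i _ => ?_
      rw [show j+(i+1) = (j+1)+i from by omega, show d+1-(i+1) = d-i from by omega,
        show 2*j+(d+1)+(i+1) = 2*(j+1)+d+i from by omega]
    rw [hre]
    simp only [Nat.add_zero, Nat.sub_zero, Tf, Hf]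
    rw [show 2*(j+1)+d = (2*j+d)+1+1 from by omega,
        show 2*j+(d+1)+1 = (2*j+d)+1+1 from by omega,
        show 2*j+(d+1) = (2*j+d)+1 from by omega]
    rw [Gf_succ, tri_succ, pow_add,
        qPoch_succ q q ((2*j+d)+1), qPoch_succ q q (2*j+d), qPoch_succ c q j,
        qPoch_succ q q d]
    have hE := qP_q_ne hq hc hu hcq (2*j+d)
    have hD := qP_q_ne hq hc hu hcq d
    have hMc := qP_c_ne hq hc hu hcq j
    have h2 : 1 - c * q^(j+1+d) ≠ 0 := hcq (j+1+d)
    have h2' : 1 - c * q^(j+(d+1)) ≠ 0 := hcq (j+(d+1))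
    have h3 := hcq j
    have h4' : (1:ℂ) - q*q^d ≠ 0 := by rw [← pow_succ']; exact hu d
    have h5' : (1:ℂ) - q*q^(2*j+d) ≠ 0 := by rw [← pow_succ']; exact hu (2*j+d)
    have h6' : (1:ℂ) - q*q^(2*j+d+1) ≠ 0 := by rw [← pow_succ']; exact hu (2*j+d+1)
    have hb : (1 - c*q^(j+1+d)) * qPoch q q d *
        (qPoch q q (2*j+d) * (1 - q*q^(2*j+d)) * (1 - q*q^(2*j+d+1))) *
        (qPoch c q j * (1 - c*q^j)) ≠ 0 := by apply_rules [mul_ne_zero]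
    have hd2 : qPoch c q j * (1 - c*q^j) * (qPoch q q d * (1 - q*q^d)) *
        (qPoch q q (2*j+d) * (1 - q*q^(2*j+d)) * (1 - q*q^(2*j+d+1))) ≠ 0 := by
      apply_rules [mul_ne_zero]
    have hf : (1 - c*q^(j+(d+1))) * (qPoch q q d * (1 - q*q^d)) *
        (qPoch q q (2*j+d) * (1 - q*q^(2*j+d))) * qPoch c q j ≠ 0 := by
      apply_rules [mul_ne_zero]
    rw [div_add_div _ _ hb hd2, div_eq_div_iff (mul_ne_zero hb hd2) hf]
    ring

lemma bridge (k m p : ℕ) :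
    Af q c k / (qPoch q q m * qPoch (q^2) q p) = Tf q c k m p := by
  have h1q : (1:ℂ) - q ≠ 0 := by simpa using hu 0
  have h1 : qPoch q q (p+1) = (1-q) * qPoch (q^2) q p := by
    rw [qPoch_shift, sq]
  have h2 : qPoch c q (k+1) = (1-c) * qPoch (c*q) q k := qPoch_shift c q k
  have hG := Gf_eq (q := q) hc k
  rw [Af, Tf, div_div, div_eq_div_iff
    (mul_ne_zero (mul_ne_zero h1q (qP_cq_ne hq hc hu hcq k))
      (mul_ne_zero (qP_q_ne hq hc hu hcq m) (qP_q2_ne hq hc hu hcq p)))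
    (mul_ne_zero (mul_ne_zero (qP_c_ne hq hc hu hcq (k+1)) (qP_q_ne hq hc hu hcq m))
      (qP_q_ne hq hc hu hcq (p+1)))]
  rw [h1, h2]
  linear_combination ((1 - q^(2*k+1)) * q^(k*(k-1)/2) * (1-c) * (1-q) *
    qPoch (c*q) q k * qPoch q q m * qPoch (q^2) q p) * hG
end Key

section BH
variable {q c : ℂ} (hq : q ≠ 0) (hc : c ≠ 0)
  (hu : ∀ k : ℕ, 1 - q ^ (k+1) ≠ 0)
  (hcq : ∀ k : ℕ, 1 - c * q ^ k ≠ 0)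
  (hqc : ∀ k : ℕ, 1 - (q/c) * q ^ k ≠ 0)

include hq hc hu hcq hqc

lemma BH (i d : ℕ) : Bf q c i * Hf q c i d
    = (1-c) / ((1 - c * q^(i+d)) * qPoch q q d * qPoch q q (2*i+d)) := by
  have hz1 : ((-c):ℂ) ^ (-(i:ℤ)) = ((-c)^i)⁻¹ := by rw [zpow_neg, zpow_natCast]
  have hz2 : (q:ℂ) ^ (-((i*(i-1)/2 : ℕ):ℤ)) = (q^(i*(i-1)/2))⁻¹ := by
    rw [zpow_neg, zpow_natCast]
  have hP : qPoch (q/c) q i ≠ 0 := qPoch_ne_zero hqc i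
  have hMc := qP_c_ne hq hc hu hcq i
  have hD := qP_q_ne hq hc hu hcq d
  have hE := qP_q_ne hq hc hu hcq (2*i+d)
  have hQ : ((-c):ℂ)^i ≠ 0 := pow_ne_zero _ (neg_ne_zero.mpr hc)
  have hR : (q:ℂ)^(i*(i-1)/2) ≠ 0 := pow_ne_zero _ hq
  have h2 := hcq (i+d)
  have hBf : Bf q c i = qPoch c q i / (qPoch (q/c) q i * ((-c)^i * q^(i*(i-1)/2))) := by
    rw [Bf, hz1, hz2, eq_div_iff (mul_ne_zero hP (mul_ne_zero hQ hR))]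
    field_simp
  rw [hBf, Hf, ← Gf_eq (q := q) hc i, div_mul_div_comm,
    div_eq_div_iff (by apply_rules [mul_ne_zero]) (by apply_rules [mul_ne_zero])]
  ring
end BH

/-- Lemma 2.2 of the paper: averaging Lovejoy's construction at `b` and `-b` gives a
Bailey pair `(L1, L2)` relative to `(q, q)`. -/
theorem stmt7 (q b : ℂ) (hq0 : 0 < ‖q‖) (hq1 : ‖q‖ < 1)
    (hb : b ≠ 0) (hb2 : b ^ 2 ≠ 1)
    (hbq : ∀ m : ℤ, b ≠ q ^ m ∧ b ≠ -q ^ m)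
    (α β : ℕ → ℂ)
    (hBailey : ∀ n : ℕ, β n = ∑ j ∈ Finset.range (n + 1),
      α j / (qPoch q q (n - j) * qPoch q q (n + j))) :
    ∀ n : ℕ,
      β n / (1 - b ^ 2 * q ^ (2 * n)) =
        ∑ j ∈ Finset.range (n + 1),
          (alphaStar q b α j / (2 * (1 - b)) + alphaStar q (-b) α j / (2 * (1 + b))) /
            (qPoch q q (n - j) * qPoch (q ^ 2) q (n + j)) := by
  have hqne : q ≠ 0 := by
    intro h; rw [h] at hq0; simp at hq0
  have hu : ∀ k : ℕ, 1 - q ^ (k+1) ≠ 0 := by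
    intro k h
    have h1 : q ^ (k+1) = 1 := by linear_combination -h
    have h2 : ‖q‖ ^ (k+1) = 1 := by
      rw [← norm_pow, h1, norm_one]
    have h3 : ‖q‖ ^ (k+1) < 1 := pow_lt_one₀ (le_of_lt hq0) hq1 (Nat.succ_ne_zero k)
    rw [h2] at h3
    exact lt_irrefl 1 h3
  have hcqb : ∀ k : ℕ, 1 - b * q ^ k ≠ 0 := by
    intro k h
    have h1 : b * q ^ k = 1 := by linear_combination -h
    exact (hbq (-(k:ℤ))).1 (by
      rw [zpow_neg, zpow_natCast]
      exact eq_inv_of_mul_eq_one_left h1)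
  have hcqnb : ∀ k : ℕ, 1 - (-b) * q ^ k ≠ 0 := by
    intro k h
    have h1 : (-b) * q ^ k = 1 := by linear_combination -h
    refine (hbq (-(k:ℤ))).2 ?_
    rw [zpow_neg, zpow_natCast]
    have := eq_inv_of_mul_eq_one_left h1
    linear_combination -this
  have hqcb : ∀ k : ℕ, 1 - (q/b) * q ^ k ≠ 0 := by
    intro k h
    have h1 : (q/b) * q ^ k = 1 := by linear_combination -h
    rw [div_mul_eq_mul_div, div_eq_one_iff_eq hb] at h1
    refine (hbq ((k:ℕ)+1 : ℕ)).1 ?_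
    rw [zpow_natCast]
    rw [← h1, pow_succ']
  have hqcnb : ∀ k : ℕ, 1 - (q/(-b)) * q ^ k ≠ 0 := by
    intro k h
    have h1 : (q/(-b)) * q ^ k = 1 := by linear_combination -h
    rw [div_mul_eq_mul_div, div_eq_one_iff_eq (neg_ne_zero.mpr hb)] at h1
    refine (hbq ((k:ℕ)+1 : ℕ)).2 ?_
    rw [zpow_natCast, pow_succ']
    linear_combination h1
  have h1mb : (1:ℂ) - b ≠ 0 := by simpa using hcqb 0
  have h1pb : (1:ℂ) + b ≠ 0 := by
    have := hcqnb 0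
    simpa [sub_neg_eq_add] using this
  have hbne := hb
  have hnbne : (-b : ℂ) ≠ 0 := neg_ne_zero.mpr hb
  intro n
  have hb2n : 1 - b ^ 2 * q ^ (2*n) ≠ 0 := by
    intro h
    have h1 : (b*q^n - 1) * (b*q^n + 1) = 0 := by ring_nf; linear_combination -h
    rcases mul_eq_zero.mp h1 with h2 | h2
    · exact hcqb n (by linear_combination -h2)
    · exact hcqnb n (by linear_combination h2)
  -- step 1: expand alphaStar into double sum
  have h1 : ∀ j : ℕ,
      (alphaStar q b α j / (2 * (1 - b)) + alphaStar q (-b) α j / (2 * (1 + b))) /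
        (qPoch q q (n - j) * qPoch (q ^ 2) q (n + j))
      = ∑ i ∈ Finset.range (j+1),
          (Af q b j * (Bf q b i * α i) / (2*(1-b)) + Af q (-b) j * (Bf q (-b) i * α i) / (2*(1+b)))
            / (qPoch q q (n - j) * qPoch (q ^ 2) q (n + j)) := by
    intro j
    show (Af q b j * (∑ i ∈ Finset.range (j+1), Bf q b i * α i) / (2*(1-b)) +
        Af q (-b) j * (∑ i ∈ Finset.range (j+1), Bf q (-b) i * α i) / (2*(1+b))) /
        (qPoch q q (n - j) * qPoch (q ^ 2) q (n + j)) = _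
    rw [Finset.mul_sum, Finset.mul_sum, Finset.sum_div, Finset.sum_div,
      ← Finset.sum_add_distrib, Finset.sum_div]
  rw [Finset.sum_congr rfl (fun j _ => h1 j)]
  -- step 2: swap order of summation
  rw [show (∑ j ∈ Finset.range (n+1), ∑ i ∈ Finset.range (j+1),
      (Af q b j * (Bf q b i * α i) / (2*(1-b)) + Af q (-b) j * (Bf q (-b) i * α i) / (2*(1+b)))
        / (qPoch q q (n - j) * qPoch (q ^ 2) q (n + j)))
      = ∑ i ∈ Finset.range (n+1), ∑ j ∈ Finset.Ico i (n+1),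
      (Af q b j * (Bf q b i * α i) / (2*(1-b)) + Af q (-b) j * (Bf q (-b) i * α i) / (2*(1+b)))
        / (qPoch q q (n - j) * qPoch (q ^ 2) q (n + j)) from by
    simp only [Finset.range_eq_Ico]
    exact (Finset.sum_Ico_Ico_comm 0 (n+1) fun i j =>
      (Af q b j * (Bf q b i * α i) / (2*(1-b)) + Af q (-b) j * (Bf q (-b) i * α i) / (2*(1+b)))
        / (qPoch q q (n - j) * qPoch (q ^ 2) q (n + j))).symm]
  -- step 3: evaluate inner sums
  have h3 : ∀ i ∈ Finset.range (n+1),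
      (∑ j ∈ Finset.Ico i (n+1),
        (Af q b j * (Bf q b i * α i) / (2*(1-b)) + Af q (-b) j * (Bf q (-b) i * α i) / (2*(1+b)))
          / (qPoch q q (n - j) * qPoch (q ^ 2) q (n + j)))
      = α i / ((1 - b ^ 2 * q ^ (2*n)) * (qPoch q q (n - i) * qPoch q q (n + i))) := by
    intro i hi
    have hin : i ≤ n := by simpa [Nat.lt_succ_iff] using hi
    have hsum : ∀ c : ℂ, c ≠ 0 → (∀ k:ℕ, 1 - c*q^k ≠ 0) →
        ∑ j ∈ Finset.Ico i (n+1), Af q c j / (qPoch q q (n-j) * qPoch (q^2) q (n+j))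
          = Hf q c i (n-i) := by
      intro c hc hcq
      rw [Finset.sum_Ico_eq_sum_range, show n+1-i = (n-i)+1 from by omega,
        ← key hqne hc hu hcq (n-i) i]
      refine Finset.sum_congr rfl fun t ht => ?_
      have htd : t ≤ n-i := by simpa [Nat.lt_succ_iff] using ht
      rw [show n - (i+t) = (n-i) - t from by omega, show n + (i+t) = 2*i+(n-i)+t from by omega]
      exact bridge hqne hc hu hcq (i+t) ((n-i)-t) (2*i+(n-i)+t)
    have hsplit : ∀ j ∈ Finset.Ico i (n+1),
        (Af q b j * (Bf q b i * α i) / (2*(1-b)) + Af q (-b) j * (Bf q (-b) i * α i) / (2*(1+b)))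
          / (qPoch q q (n - j) * qPoch (q ^ 2) q (n + j))
        = (Bf q b i * α i / (2*(1-b))) * (Af q b j / (qPoch q q (n-j) * qPoch (q^2) q (n+j)))
          + (Bf q (-b) i * α i / (2*(1+b))) * (Af q (-b) j / (qPoch q q (n-j) * qPoch (q^2) q (n+j))) :=
      fun j _ => by ring
    rw [Finset.sum_congr rfl hsplit, Finset.sum_add_distrib, ← Finset.mul_sum, ← Finset.mul_sum,
      hsum b hbne hcqb, hsum (-b) hnbne hcqnb]
    rw [show Bf q b i * α i / (2*(1-b)) * Hf q b i (n-i)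
        = α i / (2*(1-b)) * (Bf q b i * Hf q b i (n-i)) from by ring,
      show Bf q (-b) i * α i / (2*(1+b)) * Hf q (-b) i (n-i)
        = α i / (2*(1+b)) * (Bf q (-b) i * Hf q (-b) i (n-i)) from by ring,
      BH hqne hbne hu hcqb hqcb i (n-i), BH hqne hnbne hu hcqnb hqcnb i (n-i)]
    have hD := qP_q_ne hqne hbne hu hcqb (n-i)
    have hE := qP_q_ne hqne hbne hu hcqb (2*i+(n-i))
    rw [show i+(n-i) = n from by omega, show n + i = 2*i+(n-i) from by omega]
    have hkb := hcqb n
    have hknb := hcqnb n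
    have hd1 : (2*(1-b)) * ((1 - b*q^n) * qPoch q q (n-i) * qPoch q q (2*i+(n-i))) ≠ 0 :=
      mul_ne_zero (mul_ne_zero two_ne_zero h1mb)
        (mul_ne_zero (mul_ne_zero hkb hD) hE)
    have hd2 : (2*(1+b)) * ((1 - (-b)*q^n) * qPoch q q (n-i) * qPoch q q (2*i+(n-i))) ≠ 0 :=
      mul_ne_zero (mul_ne_zero two_ne_zero (by simpa [sub_neg_eq_add] using hcqnb 0))
        (mul_ne_zero (mul_ne_zero hknb hD) hE)
    have hf : (1 - b^2*q^(2*n)) * (qPoch q q (n-i) * qPoch q q (2*i+(n-i))) ≠ 0 :=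
      mul_ne_zero hb2n (mul_ne_zero hD hE)
    rw [div_mul_div_comm (α i) (2*(1-b)) (1-b) ((1 - b*q^n) * qPoch q q (n-i) * qPoch q q (2*i+(n-i))),
      div_mul_div_comm (α i) (2*(1+b)) (1-(-b)) ((1 - (-b)*q^n) * qPoch q q (n-i) * qPoch q q (2*i+(n-i))),
      div_add_div _ _ hd1 hd2, div_eq_div_iff (mul_ne_zero hd1 hd2) hf]
    ring
  rw [Finset.sum_congr rfl h3, hBailey n, Finset.sum_div]
  refine Finset.sum_congr rfl fun i _ => ?_
  rw [div_div, mul_comm]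
end

section
/- Let q ∈ ℂ with 0 < |q| < 1 and let m ≥ 1 be an integer. Then Σ_S (−1)^{max S} q^{Σ_{s∈S} s} = (−1)^m q^{m(m+1)/2} / ∏_{k=1}^{m} (1 + q^k), where the sum on the left runs over all finite sets S of positive integers with |S| = m, and the series converges absolutely. -/
open Finset
set_option maxHeartbeats 1000000

lemma geom_hasSum {q : ℂ} (hq1 : ‖q‖ < 1) {w : ℕ} (hw : 1 ≤ w) :
    HasSum (fun b : ℕ => (-1 : ℂ) ^ (b+1) * q ^ (w*(b+1))) (-q^w / (1 + q^w)) ∧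
    Summable (fun b : ℕ => ‖(-1 : ℂ) ^ (b+1) * q ^ (w*(b+1))‖) := by
  have hx : ‖-q ^ w‖ < 1 := by
    rw [norm_neg, norm_pow]
    calc ‖q‖ ^ w < 1 ^ w := by
          apply pow_lt_pow_left₀ hq1 (norm_nonneg q) (by omega)
    _ = 1 := one_pow w
  have hterm : ∀ b : ℕ, (-1 : ℂ) ^ (b+1) * q ^ (w*(b+1)) = (-q^w) * (-q^w) ^ b := by
    intro b
    rw [pow_mul, ← neg_pow, pow_succ]
    ring
  constructor
  · have h := (hasSum_geometric_of_norm_lt_one hx).mul_left (-q^w)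
    have : (-q^w) * (1 - -q^w)⁻¹ = -q^w / (1 + q^w) := by
      rw [sub_neg_eq_add, div_eq_mul_inv, add_comm]
    rw [this] at h
    exact h.congr_fun fun b => hterm b
  · have h := (summable_geometric_of_lt_one (norm_nonneg _) hx).mul_left ‖-q^w‖
    apply h.congr
    intro b
    rw [hterm b, norm_mul, norm_pow]

lemma pi_hasSum : ∀ (M : ℕ) (g : Fin M → ℕ → ℂ),
    (∀ j, Summable (fun b => ‖g j b‖)) →
    Summable (fun c : Fin M → ℕ => ‖∏ j, g j (c j)‖) ∧
    HasSum (fun c : Fin M → ℕ => ∏ j, g j (c j)) (∏ j, ∑' b, g j b) := by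
  intro M
  induction M with
  | zero =>
    intro g hg
    refine ⟨Summable.of_finite, ?_⟩
    have : (∏ j : Fin 0, ∑' b, g j b) = 1 := by simp
    rw [this]
    have h0 : ∀ c : Fin 0 → ℕ, (∏ j, g j (c j)) = 1 := by intro c; simp
    have := hasSum_single (f := fun c : Fin 0 → ℕ => ∏ j, g j (c j))
      (fun _ => 0) (by intro b hb; exact absurd (Subsingleton.elim _ _) hb)
    simpa [h0] using this
  | succ n ih =>
    intro g hg
    obtain ⟨hns0, hhs0⟩ := ih (fun i => g i.succ) (fun i => hg i.succ)
    have h0 := hg 0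
    have h0s : Summable (g 0) := h0.of_norm
    have h0hs : HasSum (g 0) (∑' b, g 0 b) := h0s.hasSum
    -- abstract the tail product to avoid higher-order unification blowups
    obtain ⟨G, hGdef⟩ : ∃ G : (Fin n → ℕ) → ℂ, G = fun c => ∏ i : Fin n, g i.succ (c i) :=
      ⟨_, rfl⟩
    have hns : Summable fun c => ‖G c‖ := by rw [hGdef]; exact hns0
    have hhs : HasSum G (∏ i : Fin n, ∑' b, g i.succ b) := by rw [hGdef]; exact hhs0
    have hprodnorm : Summable (fun p : ℕ × (Fin n → ℕ) => ‖g 0 p.1 * G p.2‖) :=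
      Summable.mul_norm h0 hns
    have hprodsum : Summable (fun p : ℕ × (Fin n → ℕ) => g 0 p.1 * G p.2) :=
      hprodnorm.of_norm
    have hmul : HasSum (fun p : ℕ × (Fin n → ℕ) => g 0 p.1 * G p.2)
        ((∑' b, g 0 b) * ∏ i : Fin n, ∑' b, g i.succ b) := h0hs.mul hhs hprodsum
    let e := (Fin.consEquiv (fun _ : Fin (n+1) => ℕ)).symm
    have hcomp : ∀ c : Fin (n+1) → ℕ,
        g 0 (e c).1 * G (e c).2 = ∏ j, g j (c j) := by
      intro c
      rw [Fin.prod_univ_succ, hGdef]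
      rfl
    constructor
    · have h2 := (Equiv.summable_iff e).2 hprodnorm
      apply h2.congr
      intro c
      simp only [Function.comp]
      rw [hcomp c]
    · have h3 : HasSum (fun c : Fin (n+1) → ℕ => g 0 (e c).1 * G (e c).2)
          ((∑' b, g 0 b) * ∏ i : Fin n, ∑' b, g i.succ b) :=
        (Equiv.hasSum_iff e).2 hmul
      rw [show (∏ j : Fin (n+1), ∑' b, g j b)
          = (∑' b, g 0 b) * ∏ i : Fin n, ∑' b, g i.succ b from Fin.prod_univ_succ _]
      exact h3.congr_fun fun c => (hcomp c).symm

namespace Stmt12Aux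

variable {m : ℕ}

/-- step sizes extended to ℕ -/
def dfun (m : ℕ) (c : Fin m → ℕ) (i : ℕ) : ℕ := if h : i < m then c ⟨i, h⟩ + 1 else 1

/-- partial sums -/
def A (m : ℕ) (c : Fin m → ℕ) (i : ℕ) : ℕ := ∑ t ∈ Finset.range (i + 1), dfun m c t

lemma one_le_dfun (c : Fin m → ℕ) (i : ℕ) : 1 ≤ dfun m c i := by
  unfold dfun; split <;> omega

lemma A_succ (c : Fin m → ℕ) (i : ℕ) : A m c (i + 1) = A m c i + dfun m c (i + 1) :=
  Finset.sum_range_succ _ _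

lemma A_zero (c : Fin m → ℕ) : A m c 0 = dfun m c 0 := by
  unfold A; simp

lemma A_strictMono (c : Fin m → ℕ) : StrictMono (A m c) := by
  apply strictMono_nat_of_lt_succ
  intro i
  rw [A_succ]
  have := one_le_dfun c (i + 1)
  omega

lemma A_pos (c : Fin m → ℕ) (i : ℕ) : 0 < A m c i := by
  have h0 : 0 < A m c 0 := by rw [A_zero]; exact one_le_dfun c 0
  exact lt_of_lt_of_le h0 ((A_strictMono c).monotone (Nat.zero_le i))

def toSet (m : ℕ) (c : Fin m → ℕ) : Finset ℕ :=
  Finset.image (fun i : Fin m => A m c i.val) Finset.univ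

lemma toSet_inj_fun (c : Fin m → ℕ) :
    Function.Injective (fun i : Fin m => A m c i.val) := by
  intro i j hij
  exact Fin.ext ((A_strictMono c).injective hij)

lemma toSet_card (c : Fin m → ℕ) : (toSet m c).card = m := by
  rw [toSet, Finset.card_image_of_injective _ (toSet_inj_fun c), Finset.card_univ,
    Fintype.card_fin]

lemma toSet_pos (c : Fin m → ℕ) : ∀ s ∈ toSet m c, 0 < s := by
  intro s hs
  rw [toSet, Finset.mem_image] at hs
  obtain ⟨i, _, rfl⟩ := hs
  exact A_pos c i.val

lemma toSet_sup (n : ℕ) (c : Fin (n + 1) → ℕ) :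
    (toSet (n + 1) c).sup id = A (n + 1) c n := by
  rw [toSet, Finset.sup_image]
  apply le_antisymm
  · apply Finset.sup_le
    intro i _
    exact (A_strictMono c).monotone (by omega : (i : ℕ) ≤ n)
  · have : ((Fin.last n : Fin (n+1)) : ℕ) = n := rfl
    calc A (n+1) c n = (id ∘ fun i : Fin (n+1) => A (n+1) c i.val) (Fin.last n) := by
          simp [this]
    _ ≤ _ := Finset.le_sup (Finset.mem_univ _)

lemma A_last (n : ℕ) (c : Fin (n + 1) → ℕ) :
    A (n + 1) c n = ∑ i : Fin (n + 1), (c i + 1) := by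
  rw [A, ← Fin.sum_univ_eq_sum_range (fun t => dfun (n+1) c t) (n+1)]
  apply Finset.sum_congr rfl
  intro i _
  rw [dfun, dif_pos i.isLt]

lemma filter_le_range (t M : ℕ) :
    Finset.filter (fun i => t ≤ i) (Finset.range M) = Finset.Ico t M := by
  ext x
  simp [Finset.mem_Ico, and_comm]

lemma filter_le_range' {i m : ℕ} (hi : i < m) :
    Finset.filter (fun t => t ≤ i) (Finset.range m) = Finset.range (i + 1) := by
  ext x
  simp only [Finset.mem_filter, Finset.mem_range, Nat.lt_succ_iff]
  omega

lemma toSet_sum (c : Fin m → ℕ) :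
    ∑ s ∈ toSet m c, s = ∑ j : Fin m, (m - j.val) * (c j + 1) := by
  rw [toSet, Finset.sum_image (fun i _ j _ h => toSet_inj_fun c h)]
  have step1 : ∀ i : Fin m, A m c i.val
      = ∑ t ∈ Finset.range m, (if t ≤ i.val then dfun m c t else 0) := by
    intro i
    rw [Finset.sum_ite, Finset.sum_const_zero, add_zero, filter_le_range' i.isLt]
    rfl
  calc ∑ i : Fin m, A m c i.val
      = ∑ i : Fin m, ∑ t ∈ Finset.range m, (if t ≤ i.val then dfun m c t else 0) :=
        Finset.sum_congr rfl (fun i _ => step1 i)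
    _ = ∑ t ∈ Finset.range m, ∑ i : Fin m, (if t ≤ i.val then dfun m c t else 0) :=
        Finset.sum_comm
    _ = ∑ t ∈ Finset.range m, (m - t) * dfun m c t := by
        apply Finset.sum_congr rfl
        intro t _
        rw [Fin.sum_univ_eq_sum_range (fun i => if t ≤ i then dfun m c t else 0) m]
        rw [← Finset.sum_filter, filter_le_range, Finset.sum_const, Nat.card_Ico,
          smul_eq_mul]
    _ = ∑ j : Fin m, (m - j.val) * (c j + 1) := by
        rw [← Fin.sum_univ_eq_sum_range (fun t => (m - t) * dfun m c t) m]
        apply Finset.sum_congr rfl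
        intro j _
        rw [dfun, dif_pos j.isLt]

lemma strictMono_finmap (c : Fin m → ℕ) :
    StrictMono (fun i : Fin m => A m c i.val) := by
  intro i j hij
  exact A_strictMono c hij

lemma mem_toSet (c : Fin m → ℕ) (i : Fin m) : A m c i.val ∈ toSet m c := by
  rw [toSet, Finset.mem_image]
  exact ⟨i, Finset.mem_univ i, rfl⟩

/-- If the A-values agree on Fin m, the step vectors agree. -/
lemma c_eq_of_A_eq (c c' : Fin m → ℕ)
    (h : ∀ i : Fin m, A m c i.val = A m c' i.val) : c = c' := by
  funext j
  rcases j with ⟨jv, hjv⟩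
  induction jv with
  | zero =>
    have h0 := h ⟨0, hjv⟩
    rw [A_zero, A_zero, dfun, dfun, dif_pos hjv, dif_pos hjv] at h0
    omega
  | succ k _ =>
    have hk : k < m := by omega
    have h1 := h ⟨k, hk⟩
    have h2 := h ⟨k + 1, hjv⟩
    simp only at h1 h2
    rw [A_succ, A_succ] at h2
    rw [h1] at h2
    have h3 : dfun m c (k+1) = dfun m c' (k+1) := by omega
    rw [dfun, dfun, dif_pos hjv, dif_pos hjv] at h3
    omega

lemma toSet_injective : Function.Injective (toSet m) := by
  intro c c' hcc
  have hcard : (toSet m c).card = m := toSet_card c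
  have hc1 : (fun i : Fin m => A m c i.val) = (toSet m c).orderEmbOfFin hcard :=
    Finset.orderEmbOfFin_unique hcard (fun i => mem_toSet c i) (strictMono_finmap c)
  have hc2 : (fun i : Fin m => A m c' i.val) = (toSet m c).orderEmbOfFin hcard := by
    apply Finset.orderEmbOfFin_unique hcard
    · intro i; rw [hcc]; exact mem_toSet c' i
    · exact strictMono_finmap c'
  apply c_eq_of_A_eq
  intro i
  have := congrFun (hc1.trans hc2.symm) i
  simpa using this

lemma toSet_surjective (S : Finset ℕ) (hpos : ∀ s ∈ S, 0 < s) (hcard : S.card = m) :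
    ∃ c : Fin m → ℕ, toSet m c = S := by
  set f := S.orderEmbOfFin hcard with hf
  have hfmem : ∀ i : Fin m, f i ∈ S := fun i => Finset.orderEmbOfFin_mem S hcard i
  have hfmono : StrictMono f := (S.orderEmbOfFin hcard).strictMono
  refine ⟨fun j => f j - (if h : j.val = 0 then 0 else
    f ⟨j.val - 1, by omega⟩) - 1, ?_⟩
  set c : Fin m → ℕ := fun j => f j - (if h : j.val = 0 then 0 else
    f ⟨j.val - 1, by omega⟩) - 1 with hc
  have key : ∀ k (hk : k < m), A m c k = f ⟨k, hk⟩ := by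
    intro k
    induction k with
    | zero =>
      intro hk
      have hf0 : 0 < f ⟨0, hk⟩ := hpos _ (hfmem _)
      rw [A_zero, dfun, dif_pos hk]
      have hcv : c ⟨0, hk⟩ = f ⟨0, hk⟩ - 0 - 1 := by simp [hc]
      omega
    | succ k ihk =>
      intro hk
      have hk' : k < m := by omega
      have hlt : f ⟨k, hk'⟩ < f ⟨k+1, hk⟩ := hfmono (by simp [Fin.lt_def])
      rw [A_succ, ihk hk', dfun, dif_pos hk]
      have hcv : c ⟨k + 1, hk⟩ = f ⟨k + 1, hk⟩ - f ⟨k, hk'⟩ - 1 := by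
        simp [hc]
      omega
  have himg : Finset.image (fun i : Fin m => f i) Finset.univ = S := by
    apply Finset.eq_of_subset_of_card_le
    · intro x hx
      rw [Finset.mem_image] at hx
      obtain ⟨i, _, rfl⟩ := hx
      exact hfmem i
    · rw [hcard, Finset.card_image_of_injective _ hfmono.injective, Finset.card_univ,
        Fintype.card_fin]
  rw [← himg, toSet]
  apply Finset.image_congr
  intro i _
  exact key i.val i.isLt

end Stmt12Aux

/-- The combinatorial claim in the proof of Theorem 1: the generating function for
partitions into `m` distinct (positive) parts, each weighted by `(−1)` raised to the
largest part, equals `(−1)^m q^{m(m+1)/2} / (−q;q)_m`. The sum runs over all finite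
sets `S` of positive integers with `|S| = m`; `S.sup id` is the largest part. -/
theorem stmt12 (q : ℂ) (hq0 : 0 < ‖q‖) (hq1 : ‖q‖ < 1)
    (m : ℕ) (hm : 1 ≤ m) :
    Summable (fun S : {S : Finset ℕ // (∀ s ∈ S, 0 < s) ∧ S.card = m} =>
      (-1 : ℂ) ^ (S.1.sup id) * q ^ (∑ s ∈ S.1, s)) ∧
    ∑' S : {S : Finset ℕ // (∀ s ∈ S, 0 < s) ∧ S.card = m},
        (-1 : ℂ) ^ (S.1.sup id) * q ^ (∑ s ∈ S.1, s) =
      (-1 : ℂ) ^ m * q ^ (m * (m + 1) / 2) / ∏ k ∈ Finset.Icc 1 m, (1 + q ^ k) := by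
  classical
  obtain ⟨n, rfl⟩ : ∃ n, m = n + 1 := ⟨m - 1, by omega⟩
  set m := n + 1 with hmdef
  -- the weighted term function
  set term : {S : Finset ℕ // (∀ s ∈ S, 0 < s) ∧ S.card = m} → ℂ :=
    fun S => (-1 : ℂ) ^ (S.1.sup id) * q ^ (∑ s ∈ S.1, s) with hterm_def
  -- the bijection
  have hbij : Function.Bijective
      (fun c : Fin m → ℕ => (⟨Stmt12Aux.toSet m c, Stmt12Aux.toSet_pos c,
          Stmt12Aux.toSet_card c⟩ : {S : Finset ℕ // (∀ s ∈ S, 0 < s) ∧ S.card = m})) := by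
    constructor
    · intro c c' hcc
      exact Stmt12Aux.toSet_injective (congrArg Subtype.val hcc)
    · rintro ⟨S, hpos, hcard⟩
      obtain ⟨c, hc⟩ := Stmt12Aux.toSet_surjective S hpos hcard
      exact ⟨c, Subtype.ext hc⟩
  set e : (Fin m → ℕ) ≃ {S : Finset ℕ // (∀ s ∈ S, 0 < s) ∧ S.card = m} :=
    Equiv.ofBijective _ hbij with he
  -- the product factors
  set g : Fin m → ℕ → ℂ := fun j b => (-1 : ℂ) ^ (b + 1) * q ^ ((m - j.val) * (b + 1))
    with hg
  have hw : ∀ j : Fin m, 1 ≤ m - j.val := fun j => by have := j.isLt; omega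
  have hgeo := fun j : Fin m => geom_hasSum hq1 (hw j)
  have hgnorm : ∀ j : Fin m, Summable (fun b => ‖g j b‖) := fun j => (hgeo j).2
  obtain ⟨hFnorm, hFsum⟩ := pi_hasSum m g hgnorm
  -- each tsum value
  have htsum : ∀ j : Fin m, (∑' b, g j b)
      = -q ^ (m - j.val) / (1 + q ^ (m - j.val)) := fun j => (hgeo j).1.tsum_eq
  -- term ∘ e = F
  have hcomp : ∀ c : Fin m → ℕ, term (e c) = ∏ j, g j (c j) := by
    intro c
    have h1 : term (e c) = (-1 : ℂ) ^ ((Stmt12Aux.toSet m c).sup id)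
        * q ^ (∑ s ∈ Stmt12Aux.toSet m c, s) := rfl
    rw [h1, Stmt12Aux.toSet_sup n c, Stmt12Aux.A_last n c, Stmt12Aux.toSet_sum c]
    rw [← Finset.prod_pow_eq_pow_sum Finset.univ (fun i : Fin m => c i + 1) (-1 : ℂ),
      ← Finset.prod_pow_eq_pow_sum Finset.univ
        (fun j : Fin m => (m - j.val) * (c j + 1)) q,
      ← Finset.prod_mul_distrib]
  have hts : HasSum term (∏ j : Fin m, ∑' b, g j b) := by
    rw [← Equiv.hasSum_iff e]
    exact hFsum.congr_fun fun c => hcomp c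
  refine ⟨hts.summable, ?_⟩
  rw [hts.tsum_eq]
  -- compute the product
  have hprod1 : (∏ j : Fin m, ∑' b, g j b)
      = ∏ t ∈ Finset.range m, (-q ^ (m - t) / (1 + q ^ (m - t))) := by
    rw [Finset.prod_congr rfl (fun j (_ : j ∈ Finset.univ) => htsum j)]
    exact Fin.prod_univ_eq_prod_range (fun t => -q ^ (m - t) / (1 + q ^ (m - t))) m
  have hprod2 : (∏ t ∈ Finset.range m, (-q ^ (m - t) / (1 + q ^ (m - t))))
      = ∏ k ∈ Finset.Icc 1 m, (-q ^ k / (1 + q ^ k)) := by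
    apply Finset.prod_nbij' (fun t => m - t) (fun k => m - k)
    · intro a ha
      rw [Finset.mem_range] at ha
      rw [Finset.mem_Icc]
      omega
    · intro a ha
      rw [Finset.mem_Icc] at ha
      rw [Finset.mem_range]
      omega
    · intro a ha
      rw [Finset.mem_range] at ha
      omega
    · intro a ha
      rw [Finset.mem_Icc] at ha
      omega
    · intro a _
      rfl
  have hgauss : ∑ k ∈ Finset.Icc 1 m, k = m * (m + 1) / 2 := by
    have h1 : ∑ k ∈ Finset.range (m + 1), k = ∑ k ∈ Finset.Icc 1 m, k := by
      have hr : Finset.range (m + 1) = insert 0 (Finset.Icc 1 m) := by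
        ext x
        simp only [Finset.mem_range, Finset.mem_insert, Finset.mem_Icc]
        omega
      rw [hr, Finset.sum_insert (by simp)]
      exact zero_add _
    have h2 := Finset.sum_range_id_mul_two (m + 1)
    simp only [Nat.add_sub_cancel] at h2
    have h3 : m * (m + 1) = (m + 1) * m := Nat.mul_comm _ _
    omega
  have hprod3 : (∏ k ∈ Finset.Icc 1 m, (-q ^ k / (1 + q ^ k)))
      = (-1 : ℂ) ^ m * q ^ (m * (m + 1) / 2) / ∏ k ∈ Finset.Icc 1 m, (1 + q ^ k) := by
    have : ∀ k ∈ Finset.Icc 1 m, -q ^ k / (1 + q ^ k)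
        = ((-1 : ℂ) * q ^ k) / (1 + q ^ k) := by
      intro k _; ring_nf
    rw [Finset.prod_congr rfl this, Finset.prod_div_distrib, Finset.prod_mul_distrib,
      Finset.prod_const, Finset.prod_pow_eq_pow_sum, hgauss, Nat.card_Icc,
      Nat.add_sub_cancel]
  rw [hprod1, hprod2, hprod3]
end
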